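/- Let 𝔇 ≥ 1 be an integer, p an odd prime not dividing 𝔇, and x, y, n integers. Then the number of quadruples (c₁, c₂, d₁, d₂) ∈ (ℤ/pℤ)⁴ satisfying A·x² + B·y² + C·x + D·y + E ≡ n (mod p) equals p³ − p if p ∤ n, and equals p³ + p(p − 1) if p | n. Here A = c₁² + 𝔇c₂², B = 𝔇A, C = 2(c₁d₁ + 𝔇c₂d₂), D = 2𝔇(c₁d₂ − c₂d₁), and E = A + d₁² + 𝔇d₂², all computed in ℤ/pℤ. -/

import Mathlib

/-- The number of quadruples `(c₁, c₂, d₁, d₂) ∈ (ℤ/pℤ)⁴` with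
`A x² + B y² + C x + D y + E = n` in `ℤ/pℤ`, where `A = c₁² + 𝔇c₂²`, `B = 𝔇A`,
`C = 2(c₁d₁ + 𝔇c₂d₂)`, `D = 2𝔇(c₁d₂ − c₂d₁)`, `E = A + d₁² + 𝔇d₂²`. -/
noncomputable def quadCount (𝔇 p : ℕ) (x y n : ℤ) : ℕ :=
  Nat.card {v : ZMod p × ZMod p × ZMod p × ZMod p //
    (v.1 ^ 2 + (𝔇 : ZMod p) * v.2.1 ^ 2) * (x : ZMod p) ^ 2
      + ((𝔇 : ZMod p) * (v.1 ^ 2 + (𝔇 : ZMod p) * v.2.1 ^ 2)) * (y : ZMod p) ^ 2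
      + (2 * (v.1 * v.2.2.1 + (𝔇 : ZMod p) * v.2.1 * v.2.2.2)) * (x : ZMod p)
      + (2 * (𝔇 : ZMod p) * (v.1 * v.2.2.2 - v.2.1 * v.2.2.1)) * (y : ZMod p)
      + ((v.1 ^ 2 + (𝔇 : ZMod p) * v.2.1 ^ 2) + v.2.2.1 ^ 2 + (𝔇 : ZMod p) * v.2.2.2 ^ 2)
      = (n : ZMod p)}

section Aux

open Finset

variable {p : ℕ} [Fact p.Prime]

private lemma sq_count_aux (hp2 : ringChar (ZMod p) ≠ 2) (t : ZMod p) :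
    ((univ.filter fun x : ZMod p => x ^ 2 = t).card : ℤ)
      = quadraticChar (ZMod p) t + 1 := by
  rw [← quadraticChar_card_sqrts hp2 t]
  congr 1
  rw [Set.toFinset_setOf]

private lemma sum_char_aux (hp2 : ringChar (ZMod p) ≠ 2)
    (D m : ZMod p) (hD : D ≠ 0) :
    ∑ b : ZMod p, quadraticChar (ZMod p) (m - D * b ^ 2)
      = if m = 0 then (p - 1) * quadraticChar (ZMod p) (-D)
        else - quadraticChar (ZMod p) (-D) := by
  set χ := quadraticChar (ZMod p) with hχ
  have key : ∀ m' : ZMod p, ∑ u : ZMod p, χ (m' - D * u) = 0 := by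
    intro m'
    have h1 : ∑ u : ZMod p,
        χ (((Equiv.mulLeft₀ D hD).trans (Equiv.subLeft m')) u)
        = ∑ u : ZMod p, χ u :=
      Equiv.sum_comp _ _
    simpa [quadraticChar_sum_zero hp2] using h1.trans (quadraticChar_sum_zero hp2)
  have key2 : ∀ a : ZMod p, a ≠ 0 → ∑ u : ZMod p, χ (a * u - D) = 0 := by
    intro a ha
    have h1 : ∑ u : ZMod p,
        χ (((Equiv.mulLeft₀ a ha).trans (Equiv.addRight (-D))) u)
        = ∑ u : ZMod p, χ u :=
      Equiv.sum_comp _ _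
    simpa [sub_eq_add_neg, quadraticChar_sum_zero hp2] using h1.trans (quadraticChar_sum_zero hp2)
  have grp : ∑ b : ZMod p, χ (m - D * b ^ 2)
      = ∑ t : ZMod p, (χ t + 1) * χ (m - D * t) := by
    rw [← Finset.sum_fiberwise' univ (fun b : ZMod p => b ^ 2)
        (fun t => χ (m - D * t))]
    refine Finset.sum_congr rfl fun t _ => ?_
    rw [Finset.sum_const, nsmul_eq_mul, sq_count_aux hp2 t]
  rw [grp]
  have expand : ∑ t : ZMod p, (χ t + 1) * χ (m - D * t)
      = (∑ t : ZMod p, χ t * χ (m - D * t)) + ∑ t : ZMod p, χ (m - D * t) := by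
    rw [← Finset.sum_add_distrib]
    exact Finset.sum_congr rfl fun t _ => by ring
  rw [expand, key m, add_zero]
  by_cases hm : m = 0
  · subst hm
    simp only [if_true]
    have step : ∀ t : ZMod p, χ t * χ (0 - D * t)
        = χ (-D) * (χ t * χ t) := by
      intro t
      have h0 : (0 : ZMod p) - D * t = -D * t := by ring
      rw [h0, map_mul]
      ring
    rw [Finset.sum_congr rfl fun t _ => step t, ← Finset.mul_sum]
    have hsq : ∑ t : ZMod p, χ t * χ t
        = ∑ t : ZMod p, (if t = 0 then 0 else 1 : ℤ) := by
      refine Finset.sum_congr rfl fun t _ => ?_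
      by_cases ht : t = 0
      · simp [ht, hχ]
      · have h1 := quadraticChar_sq_one (F := ZMod p) ht
        rw [sq] at h1
        rw [if_neg ht]
        exact h1
    rw [hsq]
    have hcard : ∑ t : ZMod p, (if t = 0 then 0 else 1 : ℤ) = (p : ℤ) - 1 := by
      rw [Finset.sum_ite, Finset.sum_const, Finset.sum_const, Finset.filter_ne',
        Finset.card_erase_of_mem (Finset.mem_univ _), Finset.card_univ, ZMod.card]
      have hp1 : 1 ≤ p := (Fact.out : p.Prime).one_lt.le
      simp [Nat.cast_sub hp1]
    rw [hcard]; ring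
  · simp only [hm, if_false]
    have hinv : ∑ t : ZMod p, χ t * χ (m - D * t)
        = ∑ s : ZMod p, χ s⁻¹ * χ (m - D * s⁻¹) :=
      (Equiv.sum_comp (Equiv.inv (ZMod p))
        (fun t => χ t * χ (m - D * t))).symm
    rw [hinv]
    have hpt : ∀ s : ZMod p, χ s⁻¹ * χ (m - D * s⁻¹)
        = χ (m * s - D) - (if s = 0 then χ (-D) else 0) := by
      intro s
      by_cases hs : s = 0
      · simp [hs, hχ]
      · simp only [hs, if_false, sub_zero]
        have h2 : m - D * s⁻¹ = s⁻¹ * (m * s - D) := by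
          field_simp
        rw [h2, map_mul]
        have hs2 : χ s⁻¹ * χ s⁻¹ = 1 := by
          have h1 := quadraticChar_sq_one (F := ZMod p) (inv_ne_zero hs)
          rw [sq] at h1; exact h1
        linear_combination χ (m * s - D) * hs2
    rw [Finset.sum_congr rfl fun s _ => hpt s, Finset.sum_sub_distrib, key2 m hm,
      zero_sub]
    congr 1
    simp

private lemma card_two_var (hp2 : ringChar (ZMod p) ≠ 2) (D m : ZMod p) (hD : D ≠ 0) :
    (Fintype.card {w : ZMod p × ZMod p // w.1 ^ 2 + D * w.2 ^ 2 = m} : ℤ)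
      = (p : ℤ) + (if m = 0 then (p - 1) * quadraticChar (ZMod p) (-D)
          else - quadraticChar (ZMod p) (-D)) := by
  have e1 : {w : ZMod p × ZMod p // w.1 ^ 2 + D * w.2 ^ 2 = m}
      ≃ Σ b : ZMod p, {a : ZMod p // a ^ 2 = m - D * b ^ 2} :=
    ((Equiv.prodComm (ZMod p) (ZMod p)).subtypeEquiv (fun w => by
        simp only [Equiv.prodComm_apply, Prod.fst_swap, Prod.snd_swap])).trans
      ((Equiv.subtypeProdEquivSigmaSubtype
          (fun b a : ZMod p => a ^ 2 + D * b ^ 2 = m)).trans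
        (Equiv.sigmaCongrRight (fun b => Equiv.subtypeEquivRight (fun a => by
          constructor <;> intro h <;> linear_combination h))))
  rw [Fintype.card_congr e1, Fintype.card_sigma]
  push_cast
  have : ∀ b : ZMod p, (Fintype.card {a : ZMod p // a ^ 2 = m - D * b ^ 2} : ℤ)
      = quadraticChar (ZMod p) (m - D * b ^ 2) + 1 := by
    intro b
    rw [Fintype.card_subtype]
    exact sq_count_aux hp2 _
  rw [Finset.sum_congr rfl fun b _ => this b, Finset.sum_add_distrib,
    sum_char_aux hp2 D m hD, Finset.sum_const, Finset.card_univ, ZMod.card]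
  ring

private lemma card_four_var (hp2 : ringChar (ZMod p) ≠ 2) (D m : ZMod p) (hD : D ≠ 0) :
    (Fintype.card {v : (ZMod p × ZMod p) × (ZMod p × ZMod p) //
        v.1.1 ^ 2 + D * v.1.2 ^ 2 + (v.2.1 ^ 2 + D * v.2.2 ^ 2) = m} : ℤ)
      = if m = 0 then (p : ℤ) ^ 3 + (p : ℤ) ^ 2 - p else (p : ℤ) ^ 3 - p := by
  set ε := quadraticChar (ZMod p) (-D) with hε
  have hε2 : ε * ε = 1 := by
    have h1 := quadraticChar_sq_one (F := ZMod p) (neg_ne_zero.mpr hD)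
    rw [sq] at h1; exact h1
  have e1 : {v : (ZMod p × ZMod p) × (ZMod p × ZMod p) //
        v.1.1 ^ 2 + D * v.1.2 ^ 2 + (v.2.1 ^ 2 + D * v.2.2 ^ 2) = m}
      ≃ Σ w : ZMod p × ZMod p,
          {u : ZMod p × ZMod p // u.1 ^ 2 + D * u.2 ^ 2
            = m - (w.1 ^ 2 + D * w.2 ^ 2)} :=
    (Equiv.subtypeProdEquivSigmaSubtype
        (fun w u : ZMod p × ZMod p =>
          w.1 ^ 2 + D * w.2 ^ 2 + (u.1 ^ 2 + D * u.2 ^ 2) = m)).trans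
      (Equiv.sigmaCongrRight (fun w => Equiv.subtypeEquivRight (fun u => by
        constructor <;> intro h <;> linear_combination h)))
  rw [Fintype.card_congr e1, Fintype.card_sigma]
  push_cast
  have step : ∀ w : ZMod p × ZMod p,
      (Fintype.card {u : ZMod p × ZMod p // u.1 ^ 2 + D * u.2 ^ 2
          = m - (w.1 ^ 2 + D * w.2 ^ 2)} : ℤ)
        = (p : ℤ) - ε + (if w.1 ^ 2 + D * w.2 ^ 2 = m then (p : ℤ) * ε else 0) := by
    intro w
    rw [card_two_var hp2 D _ hD, ← hε]
    by_cases h : w.1 ^ 2 + D * w.2 ^ 2 = m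
    · rw [if_pos h, if_pos (by rw [h, sub_self] : m - (w.1 ^ 2 + D * w.2 ^ 2) = 0)]
      ring
    · rw [if_neg h, if_neg (fun hc => h (by linear_combination -hc)), add_zero]
      ring
  rw [Finset.sum_congr rfl fun w _ => step w, Finset.sum_add_distrib,
    Finset.sum_const, Finset.card_univ]
  have hcard2 : (Fintype.card (ZMod p × ZMod p) : ℤ) = (p : ℤ) ^ 2 := by
    rw [Fintype.card_prod, ZMod.card]; push_cast; ring
  have hsumite : ∑ w : ZMod p × ZMod p,
      (if w.1 ^ 2 + D * w.2 ^ 2 = m then (p : ℤ) * ε else 0)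
      = (Fintype.card {w : ZMod p × ZMod p // w.1 ^ 2 + D * w.2 ^ 2 = m} : ℤ)
        * ((p : ℤ) * ε) := by
    rw [Finset.sum_ite, Finset.sum_const, Finset.sum_const_zero, add_zero,
      Fintype.card_subtype, nsmul_eq_mul]
  rw [hsumite, card_two_var hp2 D m hD, ← hε, nsmul_eq_mul, hcard2]
  by_cases hm : m = 0
  · rw [if_pos hm, if_pos hm]
    linear_combination ((p : ℤ) ^ 2 - p) * hε2
  · rw [if_neg hm, if_neg hm]
    linear_combination (-(p : ℤ)) * hε2

end Aux

private def shearEquiv {p : ℕ} (D X Y : ZMod p) :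
    (ZMod p × ZMod p × ZMod p × ZMod p) ≃ (ZMod p × ZMod p) × (ZMod p × ZMod p) where
  toFun v := ((v.1, v.2.1),
    (v.2.2.1 + v.1 * X - D * v.2.1 * Y, v.2.2.2 + v.2.1 * X + v.1 * Y))
  invFun w := (w.1.1, w.1.2,
    w.2.1 - w.1.1 * X + D * w.1.2 * Y, w.2.2 - w.1.2 * X - w.1.1 * Y)
  left_inv := by
    rintro ⟨a, b, c, d⟩
    simp only [Prod.mk.injEq, eq_self_iff_true, true_and, and_true]
    exact ⟨by ring, by ring⟩
  right_inv := by
    rintro ⟨⟨a, b⟩, ⟨c, d⟩⟩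
    simp only [Prod.mk.injEq, eq_self_iff_true, true_and, and_true]
    exact ⟨by ring, by ring⟩

/-- For `𝔇 ≥ 1`, `p` an odd prime not dividing `𝔇` and integers `x, y, n`, the number of
quadruples `(c₁, c₂, d₁, d₂) ∈ (ℤ/pℤ)⁴` with `Q(x,y) ≡ n (mod p)` equals `p³ − p` when
`p ∤ n` and `p³ + p(p−1)` when `p ∣ n`. -/
theorem quadCount_values (𝔇 : ℕ) (h𝔇 : 1 ≤ 𝔇) (p : ℕ) (hp : p.Prime) (hodd : Odd p)
    (hpD : ¬ p ∣ 𝔇) (x y n : ℤ) :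
    (¬ ((p : ℤ) ∣ n) → quadCount 𝔇 p x y n = p ^ 3 - p) ∧
    (((p : ℤ) ∣ n) → quadCount 𝔇 p x y n = p ^ 3 + p * (p - 1)) := by
  haveI : Fact p.Prime := ⟨hp⟩
  have hp2 : ringChar (ZMod p) ≠ 2 := by
    rw [ZMod.ringChar_zmod_n]
    rintro rfl
    simp [Nat.odd_iff] at hodd
  have hD : (𝔇 : ZMod p) ≠ 0 := fun h =>
    hpD ((ZMod.natCast_eq_zero_iff _ _).mp h)
  set D : ZMod p := (𝔇 : ZMod p) with hDdef
  set X : ZMod p := (x : ZMod p) with hX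
  set Y : ZMod p := (y : ZMod p) with hY
  set N : ZMod p := (n : ZMod p) with hN
  have hcount : quadCount 𝔇 p x y n
      = Fintype.card {v : (ZMod p × ZMod p) × (ZMod p × ZMod p) //
          v.1.1 ^ 2 + D * v.1.2 ^ 2 + (v.2.1 ^ 2 + D * v.2.2 ^ 2) = N} := by
    unfold quadCount
    rw [Nat.card_eq_fintype_card]
    refine Fintype.card_congr (Equiv.subtypeEquiv (shearEquiv D X Y) fun v => ?_)
    obtain ⟨a, b, c, d⟩ := v
    show _ ↔ _
    simp only [shearEquiv, Equiv.coe_fn_mk]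
    constructor <;> intro h <;> linear_combination h
  have hmain := card_four_var (p := p) hp2 D N hD
  rw [← hcount] at hmain
  have hdvd : ((p : ℤ) ∣ n) ↔ N = 0 := by
    rw [hN]
    exact (ZMod.intCast_zmod_eq_zero_iff_dvd n p).symm
  have hp1 : 1 ≤ p := hp.one_lt.le
  have hle : p ≤ p ^ 3 := Nat.le_self_pow (by norm_num) p
  constructor
  · intro hnd
    have hN0 : ¬ N = 0 := fun h => hnd (hdvd.mpr h)
    rw [if_neg hN0] at hmain
    have h2 : ((p ^ 3 - p : ℕ) : ℤ) = (p : ℤ) ^ 3 - (p : ℤ) := by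
      rw [Nat.cast_sub hle]; push_cast; ring
    exact Nat.cast_injective (R := ℤ) (hmain.trans h2.symm)
  · intro hd
    rw [if_pos (hdvd.mp hd)] at hmain
    have h2 : ((p ^ 3 + p * (p - 1) : ℕ) : ℤ) = (p : ℤ) ^ 3 + (p : ℤ) ^ 2 - (p : ℤ) := by
      rw [Nat.cast_add, Nat.cast_mul, Nat.cast_sub hp1]; push_cast; ring
    exact Nat.cast_injective (R := ℤ) (hmain.trans h2.symm)
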